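/- For all integers n, m ≥ 1, ∫_0^∞ tanh(s)^{n+m-2}/cosh(s)² ds = 1/(n+m-1). Consequently, the stationary Gaussian state a_n^{**}(t) = ∫_{-∞}^t tanh(t-s)^{n-1}/cosh(t-s) dW(s) of the white-noise forced shell model has covariance E[a_n^{**} a_m^{**}] = 1/(n+m-1). -/

import Mathlib

open Real MeasureTheory Filter

lemma hasDerivAt_tanh' (x : ℝ) : HasDerivAt Real.tanh (1 / Real.cosh x ^ 2) x := by
  have hc : Real.cosh x ≠ 0 := (Real.cosh_pos x).ne'
  have h := (Real.hasDerivAt_sinh x).div (Real.hasDerivAt_cosh x) hc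
  have heq : ∀ y : ℝ, Real.tanh y = Real.sinh y / Real.cosh y := fun y =>
    Real.tanh_eq_sinh_div_cosh y
  have : (Real.cosh x * Real.cosh x - Real.sinh x * Real.sinh x) / Real.cosh x ^ 2
      = 1 / Real.cosh x ^ 2 := by
    rw [← Real.cosh_sq_sub_sinh_sq x]; ring
  simpa [this, funext heq, Pi.div_def] using h

lemma tendsto_tanh_atTop : Tendsto Real.tanh atTop (nhds 1) := by
  have h1 : ∀ x : ℝ, Real.tanh x = 1 - 2 / (Real.exp (2 * x) + 1) := by
    intro x
    have he : Real.exp x ≠ 0 := (Real.exp_pos x).ne'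
    have he2 : Real.exp (2 * x) + 1 ≠ 0 := by positivity
    rw [Real.tanh_eq_sinh_div_cosh, Real.sinh_eq, Real.cosh_eq]
    have h2x : Real.exp (2 * x) = Real.exp x * Real.exp x := by
      rw [two_mul, Real.exp_add]
    have hinv : Real.exp (-x) = (Real.exp x)⁻¹ := Real.exp_neg x
    have hc : (Real.exp x + Real.exp (-x)) / 2 ≠ 0 := by positivity
    rw [h2x, hinv]
    field_simp [h2x, hinv]
    ring
  have h2 : Tendsto (fun x : ℝ => 1 - 2 / (Real.exp (2 * x) + 1)) atTop (nhds 1) := by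
    have : Tendsto (fun x : ℝ => Real.exp (2 * x) + 1) atTop atTop :=
      (Real.tendsto_exp_atTop.comp (tendsto_id.const_mul_atTop two_pos)).atTop_add
        tendsto_const_nhds
    have := (tendsto_const_nhds (x := (2:ℝ))).div_atTop this
    simpa using (tendsto_const_nhds (x := (1:ℝ))).sub this
  simpa [funext h1] using h2

lemma key_integral (k : ℕ) :
    (∫ s in Set.Ioi (0 : ℝ), Real.tanh s ^ k / Real.cosh s ^ 2) = 1 / (k + 1 : ℝ) := by
  set g : ℝ → ℝ := fun x => Real.tanh x ^ (k + 1) / (k + 1)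
  have hk : (k + 1 : ℝ) ≠ 0 := by positivity
  have hderiv : ∀ x ∈ Set.Ici (0 : ℝ), HasDerivAt g (Real.tanh x ^ k / Real.cosh x ^ 2) x := by
    intro x _
    have h := ((hasDerivAt_tanh' x).pow (k + 1)).div_const (k + 1 : ℝ)
    refine HasDerivAt.congr_deriv h ?_
    rw [Nat.add_sub_cancel]
    push_cast
    field_simp
  have hpos : ∀ x ∈ Set.Ioi (0 : ℝ), 0 ≤ Real.tanh x ^ k / Real.cosh x ^ 2 := by
    intro x hx
    have hs : 0 ≤ Real.sinh x := by
      rw [← Real.sinh_zero]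
      exact Real.sinh_le_sinh.2 (le_of_lt hx)
    have ht : 0 ≤ Real.tanh x := by
      rw [Real.tanh_eq_sinh_div_cosh]
      exact div_nonneg hs (Real.cosh_pos x).le
    positivity
  have hlim : Tendsto g atTop (nhds (1 / (k + 1 : ℝ))) := by
    have := (tendsto_tanh_atTop.pow (k + 1)).div_const (k + 1 : ℝ)
    simpa using this
  have := integral_Ioi_of_hasDerivAt_of_nonneg' hderiv hpos hlim
  simpa [g, Real.tanh_eq_sinh_div_cosh] using this

/-- For all `n, m ≥ 1`, `∫₀^∞ tanh(s)^{n+m-2}/cosh(s)² ds = 1/(n+m-1)`.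
Consequently (via the Itô isometry, taken as hypothesis), the covariance
`E[a_n^{**} a_m^{**}]` of the stationary Gaussian state
`a_n^{**}(t) = ∫_{-∞}^t tanh(t-s)^{n-1}/cosh(t-s) dW(s)` equals `1/(n+m-1)`. -/
theorem stmt16 (n m : ℕ) (hn : 1 ≤ n) (hm : 1 ≤ m) :
    (∫ s in Set.Ioi (0 : ℝ), Real.tanh s ^ (n + m - 2) / Real.cosh s ^ 2)
      = 1 / ((n : ℝ) + (m : ℝ) - 1) ∧
    ∀ cov : ℝ,
      cov = (∫ s in Set.Ioi (0 : ℝ),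
        (Real.tanh s ^ (n - 1) / Real.cosh s) * (Real.tanh s ^ (m - 1) / Real.cosh s)) →
      cov = 1 / ((n : ℝ) + (m : ℝ) - 1) := by
  have hcast : ((n + m - 2 : ℕ) : ℝ) + 1 = (n : ℝ) + (m : ℝ) - 1 := by
    have h2 : 2 ≤ n + m := by omega
    push_cast [Nat.cast_sub h2]
    ring
  have h1 : (∫ s in Set.Ioi (0 : ℝ), Real.tanh s ^ (n + m - 2) / Real.cosh s ^ 2)
      = 1 / ((n : ℝ) + (m : ℝ) - 1) := by
    rw [key_integral (n + m - 2), hcast]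
  refine ⟨h1, fun cov hcov => ?_⟩
  rw [hcov, ← h1]
  congr 1
  ext s
  have : n - 1 + (m - 1) = n + m - 2 := by omega
  rw [div_mul_div_comm, ← pow_add, this, sq]
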